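/- arXiv:2305.12475 — 7 statements merged into one kernel-verified Lean document; each statement's English description precedes it below -/
import Mathlib

section
/- For any real number η > 0, smoothness constant ℓ > 0 with ηℓ ≥ 5 (so that τ := ⌈(ηℓ)² − 1⌉ ≥ 1), the product ∏_{t=0}^{τ−1} (1 + ℓ²η²/(t+1)) is at most (1/√(2πτ)) · (4e)^τ. -/
open Finset

lemma sqrt_pi_le_stirlingSeq (n : ℕ) : Real.sqrt Real.pi ≤ Stirling.stirlingSeq (n + 1) := by
  have h := Stirling.tendsto_stirlingSeq_sqrt_pi
  have h' : Filter.Tendsto (Stirling.stirlingSeq ∘ Nat.succ) Filter.atTop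
      (nhds (Real.sqrt Real.pi)) :=
    h.comp (Filter.tendsto_add_atTop_nat 1)
  exact Stirling.stirlingSeq'_antitone.le_of_tendsto h' n

lemma stirling_lower (n : ℕ) (hn : 1 ≤ n) :
    Real.sqrt (2 * Real.pi * n) * ((n : ℝ) / Real.exp 1) ^ n ≤ (Nat.factorial n : ℝ) := by
  obtain ⟨m, rfl⟩ := Nat.exists_eq_add_of_le hn
  have h := sqrt_pi_le_stirlingSeq m
  rw [add_comm 1 m]
  unfold Stirling.stirlingSeq at h
  set k : ℕ := m + 1
  have hk : (0:ℝ) < k := by positivity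
  have hpos : (0:ℝ) < Real.sqrt (2 * k) * ((k : ℝ) / Real.exp 1) ^ k := by positivity
  rw [le_div_iff₀ hpos] at h
  calc Real.sqrt (2 * Real.pi * k) * ((k : ℝ) / Real.exp 1) ^ k
      = Real.sqrt Real.pi * (Real.sqrt (2 * k) * ((k : ℝ) / Real.exp 1) ^ k) := by
        rw [show 2 * Real.pi * (k:ℝ) = Real.pi * (2 * k) by ring,
          Real.sqrt_mul Real.pi_pos.le]
        ring
    _ ≤ (Nat.factorial k : ℝ) := h

lemma prod_range_add_one (n : ℕ) : ∏ t ∈ Finset.range n, ((t : ℝ) + 1) = (Nat.factorial n : ℝ) := by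
  induction n with
  | zero => simp
  | succ n ih =>
    rw [Finset.prod_range_succ, ih, Nat.factorial_succ]
    push_cast
    ring

theorem stmt_0 (η ℓ : ℝ) (hη : 0 < η) (hℓ : 0 < ℓ) (h : 5 ≤ η * ℓ)
    (τ : ℕ) (hτ : τ = ⌈(η * ℓ) ^ 2 - 1⌉₊) :
    ∏ t ∈ Finset.range τ, (1 + ℓ ^ 2 * η ^ 2 / ((t : ℝ) + 1)) ≤
      (1 / Real.sqrt (2 * Real.pi * τ)) * (4 * Real.exp 1) ^ τ := by
  set a : ℝ := (η * ℓ) ^ 2 with ha_def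
  have ha25 : 25 ≤ a := by nlinarith
  have hceil : a - 1 ≤ (τ : ℝ) := by
    rw [hτ]; exact Nat.le_ceil _
  have haτ : a ≤ (τ : ℝ) + 1 := by linarith
  have hτ1 : 1 ≤ τ := by
    rw [hτ]
    exact Nat.ceil_pos.mpr (by linarith)
  have hτR : (1:ℝ) ≤ (τ : ℝ) := by exact_mod_cast hτ1
  have hτpos : (0:ℝ) < τ := by linarith
  -- Step 1: bound each factor
  have step1 : ∏ t ∈ Finset.range τ, (1 + ℓ ^ 2 * η ^ 2 / ((t : ℝ) + 1)) ≤
      ∏ t ∈ Finset.range τ, ((2 * (τ:ℝ) + 1) / ((t : ℝ) + 1)) := by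
    apply Finset.prod_le_prod
    · intro t _
      positivity
    · intro t ht
      have ht' : (t : ℝ) + 1 ≤ τ := by
        have := Finset.mem_range.mp ht
        have : (t:ℝ) < τ := by exact_mod_cast this
        have htn : t + 1 ≤ τ := Finset.mem_range.mp ht
        exact_mod_cast htn
      have htpos : (0:ℝ) < (t:ℝ) + 1 := by positivity
      have heq : 1 + ℓ ^ 2 * η ^ 2 / ((t : ℝ) + 1) = ((t:ℝ) + 1 + a) / ((t:ℝ) + 1) := by
        field_simp [ha_def]
        ring
      rw [heq, div_le_div_iff₀ htpos htpos]
      nlinarith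
  -- Step 2: compute the product
  have step2 : ∏ t ∈ Finset.range τ, ((2 * (τ:ℝ) + 1) / ((t : ℝ) + 1)) =
      (2 * (τ:ℝ) + 1) ^ τ / (Nat.factorial τ : ℝ) := by
    rw [Finset.prod_div_distrib, Finset.prod_const, prod_range_add_one, Finset.card_range]
  -- Step 3: Stirling
  have hst := stirling_lower τ hτ1
  have hsqpos : (0:ℝ) < Real.sqrt (2 * Real.pi * τ) := by
    apply Real.sqrt_pos.mpr
    positivity
  have hstpos : (0:ℝ) < Real.sqrt (2 * Real.pi * τ) * ((τ : ℝ) / Real.exp 1) ^ τ := by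
    positivity
  have step3 : (2 * (τ:ℝ) + 1) ^ τ / (Nat.factorial τ : ℝ) ≤
      (2 * (τ:ℝ) + 1) ^ τ / (Real.sqrt (2 * Real.pi * τ) * ((τ : ℝ) / Real.exp 1) ^ τ) := by
    apply div_le_div_of_nonneg_left _ hstpos hst
    positivity
  -- Step 4: final bound
  have step4 : (2 * (τ:ℝ) + 1) ^ τ / (Real.sqrt (2 * Real.pi * τ) * ((τ : ℝ) / Real.exp 1) ^ τ) ≤
      (1 / Real.sqrt (2 * Real.pi * τ)) * (4 * Real.exp 1) ^ τ := by
    have hrw : (2 * (τ:ℝ) + 1) ^ τ / (Real.sqrt (2 * Real.pi * τ) * ((τ : ℝ) / Real.exp 1) ^ τ)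
        = (1 / Real.sqrt (2 * Real.pi * τ)) * ((2 * (τ:ℝ) + 1) * Real.exp 1 / τ) ^ τ := by
      have he : Real.exp 1 ≠ 0 := (Real.exp_pos 1).ne'
      have hτne : (τ:ℝ) ≠ 0 := hτpos.ne'
      have hsne : Real.sqrt (2 * Real.pi * τ) ≠ 0 := hsqpos.ne'
      rw [div_pow, div_pow, mul_pow]
      field_simp
    rw [hrw]
    apply mul_le_mul_of_nonneg_left _ (by positivity)
    apply pow_le_pow_left₀ (by positivity)
    rw [div_le_iff₀ hτpos]
    nlinarith [Real.exp_pos 1, Real.add_one_le_exp (1:ℝ)]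
  calc ∏ t ∈ Finset.range τ, (1 + ℓ ^ 2 * η ^ 2 / ((t : ℝ) + 1))
      ≤ ∏ t ∈ Finset.range τ, ((2 * (τ:ℝ) + 1) / ((t : ℝ) + 1)) := step1
    _ = (2 * (τ:ℝ) + 1) ^ τ / (Nat.factorial τ : ℝ) := step2
    _ ≤ (2 * (τ:ℝ) + 1) ^ τ / (Real.sqrt (2 * Real.pi * τ) * ((τ : ℝ) / Real.exp 1) ^ τ) := step3
    _ ≤ (1 / Real.sqrt (2 * Real.pi * τ)) * (4 * Real.exp 1) ^ τ := step4
end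

section
/- Consider gradient descent on f(x) = (ℓ/2)x² on ℝ with stepsize η_t = η/√(t+1) starting from x_0 > 0, where ηℓ ≥ 5. Then for every t with 1 ≤ t ≤ ⌊η²ℓ²/16 − 1⌋, the iterate satisfies x_t² ≥ (1/(3√t)) (8e)^t x_0². -/
open Stirling Real in
lemma fact_le_aux_stmt4 (t : ℕ) (ht : 1 ≤ t) :
    (t.factorial : ℝ) ≤ 3 * Real.sqrt t * ((t : ℝ) / Real.exp 1) ^ t := by
  have htR : (1:ℝ) ≤ t := by exact_mod_cast ht
  have hpos : (0:ℝ) < Real.sqrt (2 * t) * ((t : ℝ) / Real.exp 1) ^ t := by positivity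
  have hs : stirlingSeq t ≤ stirlingSeq 1 := by
    have h0 : 0 < stirlingSeq t := by
      rw [stirlingSeq]
      positivity
    have h1 : 0 < stirlingSeq 1 := by
      rw [stirlingSeq_one]; positivity
    have := log_stirlingSeq'_antitone (Nat.zero_le (t - 1))
    simp only [Function.comp, Nat.succ_eq_add_one, zero_add, Nat.sub_add_cancel ht] at this
    exact (Real.log_le_log_iff h0 h1).mp this
  have hdef : (t.factorial : ℝ) = stirlingSeq t * (Real.sqrt (2 * t) * ((t : ℝ) / Real.exp 1) ^ t) := by
    rw [stirlingSeq, div_mul_cancel₀ _ (ne_of_gt hpos)]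
  rw [hdef, stirlingSeq_one] at *
  have key : Real.exp 1 / Real.sqrt 2 * Real.sqrt (2 * t) ≤ 3 * Real.sqrt t := by
    rw [Real.sqrt_mul (by norm_num), ← mul_assoc,
      div_mul_cancel₀ _ (by positivity : Real.sqrt 2 ≠ 0)]
    have : Real.exp 1 ≤ 3 := by
      calc Real.exp 1 ≤ 2.7182818286 := Real.exp_one_lt_d9.le
      _ ≤ 3 := by norm_num
    nlinarith [Real.sqrt_nonneg (t:ℝ)]
  calc stirlingSeq t * (Real.sqrt (2 * t) * ((t : ℝ) / Real.exp 1) ^ t)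
      ≤ Real.exp 1 / Real.sqrt 2 * (Real.sqrt (2 * t) * ((t : ℝ) / Real.exp 1) ^ t) := by
        apply mul_le_mul_of_nonneg_right hs hpos.le
    _ = (Real.exp 1 / Real.sqrt 2 * Real.sqrt (2 * t)) * ((t : ℝ) / Real.exp 1) ^ t := by ring
    _ ≤ 3 * Real.sqrt t * ((t : ℝ) / Real.exp 1) ^ t := by
        apply mul_le_mul_of_nonneg_right key (by positivity)

theorem stmt_4 (η ℓ : ℝ) (hη : 0 < η) (hℓ : 0 < ℓ) (h : 5 ≤ η * ℓ)
    (x : ℕ → ℝ) (hx0 : 0 < x 0)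
    (hupd : ∀ t : ℕ, x (t + 1) = (1 - η * ℓ / Real.sqrt ((t : ℝ) + 1)) * x t) :
    ∀ t : ℕ, 1 ≤ t → t ≤ ⌊η ^ 2 * ℓ ^ 2 / 16 - 1⌋₊ →
      (1 / (3 * Real.sqrt t)) * (8 * Real.exp 1) ^ t * (x 0) ^ 2 ≤ (x t) ^ 2 := by
  have hηℓ : 25 ≤ η ^ 2 * ℓ ^ 2 := by nlinarith
  have hNle : (⌊η ^ 2 * ℓ ^ 2 / 16 - 1⌋₊ : ℝ) ≤ η ^ 2 * ℓ ^ 2 / 16 - 1 :=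
    Nat.floor_le (by nlinarith)
  have main : ∀ s : ℕ, s ≤ ⌊η ^ 2 * ℓ ^ 2 / 16 - 1⌋₊ →
      (η ^ 2 * ℓ ^ 2 / 2) ^ s / (s.factorial : ℝ) * (x 0) ^ 2 ≤ (x s) ^ 2 := by
    intro s
    induction s with
    | zero => simp
    | succ n ih =>
      intro hsn
      have ihn := ih (Nat.le_of_succ_le hsn)
      have hs1 : ((n : ℝ) + 1) ≤ η ^ 2 * ℓ ^ 2 / 16 := by
        have : ((n + 1 : ℕ) : ℝ) ≤ (⌊η ^ 2 * ℓ ^ 2 / 16 - 1⌋₊ : ℝ) := Nat.cast_le.mpr hsn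
        push_cast at this
        linarith
      set r := Real.sqrt ((n : ℝ) + 1) with hr
      have hspos : 0 < r := Real.sqrt_pos.mpr (by positivity)
      have hs2 : r ^ 2 = (n : ℝ) + 1 := Real.sq_sqrt (by positivity)
      have hsle : r ≤ η * ℓ / 4 := by
        have h1 : r ≤ Real.sqrt (η ^ 2 * ℓ ^ 2 / 16) := Real.sqrt_le_sqrt hs1
        rwa [show η ^ 2 * ℓ ^ 2 / 16 = (η * ℓ / 4) ^ 2 by ring,
          Real.sqrt_sq (by positivity)] at h1
      have ha : 4 ≤ η * ℓ / r := by
        rw [le_div_iff₀ hspos]; nlinarith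
      have ha2 : (η * ℓ / r) ^ 2 = η ^ 2 * ℓ ^ 2 / ((n : ℝ) + 1) := by
        rw [div_pow, hs2]; ring
      have key : η ^ 2 * ℓ ^ 2 / (2 * ((n : ℝ) + 1)) ≤ (1 - η * ℓ / r) ^ 2 := by
        have heq : η ^ 2 * ℓ ^ 2 / (2 * ((n : ℝ) + 1)) = (η * ℓ / r) ^ 2 / 2 := by
          rw [ha2]; field_simp
        rw [heq]
        nlinarith [ha]
      have hxn2 : (0:ℝ) ≤ (x n) ^ 2 := sq_nonneg _
      have hfac : ((n + 1).factorial : ℝ) = ((n : ℝ) + 1) * (n.factorial : ℝ) := by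
        rw [Nat.factorial_succ]; push_cast; ring
      have hfpos : (0:ℝ) < (n.factorial : ℝ) := by positivity
      calc (η ^ 2 * ℓ ^ 2 / 2) ^ (n + 1) / ((n + 1).factorial : ℝ) * (x 0) ^ 2
          = (η ^ 2 * ℓ ^ 2 / (2 * ((n : ℝ) + 1))) *
              ((η ^ 2 * ℓ ^ 2 / 2) ^ n / (n.factorial : ℝ) * (x 0) ^ 2) := by
            rw [hfac, pow_succ]
            field_simp
        _ ≤ (η ^ 2 * ℓ ^ 2 / (2 * ((n : ℝ) + 1))) * (x n) ^ 2 := by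
            apply mul_le_mul_of_nonneg_left ihn (by positivity)
        _ ≤ (1 - η * ℓ / r) ^ 2 * (x n) ^ 2 := mul_le_mul_of_nonneg_right key hxn2
        _ = (x (n + 1)) ^ 2 := by rw [hupd n, mul_pow]
  intro t ht htN
  have htR : (1:ℝ) ≤ t := by exact_mod_cast ht
  have h16t : 16 * (t : ℝ) ≤ η ^ 2 * ℓ ^ 2 := by
    have : (t : ℝ) ≤ (⌊η ^ 2 * ℓ ^ 2 / 16 - 1⌋₊ : ℝ) := Nat.cast_le.mpr htN
    linarith
  have hfact := fact_le_aux_stmt4 t ht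
  have hepos : (0:ℝ) < Real.exp 1 := Real.exp_pos 1
  have hfpos : (0:ℝ) < (t.factorial : ℝ) := by positivity
  have hsqtpos : (0:ℝ) < Real.sqrt t := Real.sqrt_pos.mpr (by positivity)
  have hcoef : (1 / (3 * Real.sqrt t)) * (8 * Real.exp 1) ^ t ≤
      (η ^ 2 * ℓ ^ 2 / 2) ^ t / (t.factorial : ℝ) := by
    rw [div_mul_eq_mul_div, one_mul, div_le_div_iff₀ (by positivity) hfpos]
    calc (8 * Real.exp 1) ^ t * (t.factorial : ℝ)
        ≤ (8 * Real.exp 1) ^ t * (3 * Real.sqrt t * ((t : ℝ) / Real.exp 1) ^ t) := by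
          apply mul_le_mul_of_nonneg_left hfact (by positivity)
      _ = (8 * (t:ℝ)) ^ t * (3 * Real.sqrt t) := by
          rw [show (8 * Real.exp 1) ^ t * (3 * Real.sqrt t * ((t : ℝ) / Real.exp 1) ^ t)
              = ((8 * Real.exp 1) * ((t : ℝ) / Real.exp 1)) ^ t * (3 * Real.sqrt t) by
            rw [mul_pow]; ring]
          congr 2
          field_simp
      _ ≤ (η ^ 2 * ℓ ^ 2 / 2) ^ t * (3 * Real.sqrt t) := by
          apply mul_le_mul_of_nonneg_right _ (by positivity)
          exact pow_le_pow_left₀ (by positivity) (by linarith) t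
  calc (1 / (3 * Real.sqrt t)) * (8 * Real.exp 1) ^ t * (x 0) ^ 2
      ≤ (η ^ 2 * ℓ ^ 2 / 2) ^ t / (t.factorial : ℝ) * (x 0) ^ 2 :=
        mul_le_mul_of_nonneg_right hcoef (sq_nonneg _)
    _ ≤ (x t) ^ 2 := main t htN
end

section
/- Let f(x) = (L/2)x² on ℝ with 0 < L. Suppose at point x_t the stochastic gradient is g = (1+δ)∇f(x_t) or g = (1−δ)∇f(x_t), each with probability 1/2, where δ > 1, and the normalized SGD update is x_{t+1} = x_t − γ_t g/|g| for some γ_t > 0. Then E[|∇f(x_{t+1})| | x_t] = (L/2)(|x_t − γ_t| + |x_t + γ_t|) ≥ L|x_t| = |∇f(x_t)|. -/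
theorem stmt_7 (L γ δ xt : ℝ) (hL : 0 < L) (hγ : 0 < γ) (hδ : 1 < δ) (hxt : xt ≠ 0)
    (g₁ g₂ x₁' x₂' : ℝ)
    (hg₁ : g₁ = (1 + δ) * (L * xt)) (hg₂ : g₂ = (1 - δ) * (L * xt))
    (hx₁ : x₁' = xt - γ * (g₁ / |g₁|)) (hx₂ : x₂' = xt - γ * (g₂ / |g₂|)) :
    (1 / 2) * (L * |x₁'|) + (1 / 2) * (L * |x₂'|) = (L / 2) * (|xt - γ| + |xt + γ|) ∧
      L * |xt| ≤ (L / 2) * (|xt - γ| + |xt + γ|) := by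
  have htri : 2 * |xt| ≤ |xt - γ| + |xt + γ| := by
    have h := abs_add_le (xt - γ) (xt + γ)
    have h2 : (xt - γ) + (xt + γ) = 2 * xt := by ring
    rw [h2, abs_mul] at h
    simpa using h
  refine ⟨?_, by nlinarith⟩
  rcases hxt.lt_or_gt with hneg | hpos
  · have hg1 : g₁ < 0 := hg₁ ▸ mul_neg_of_pos_of_neg (by linarith) (mul_neg_of_pos_of_neg hL hneg)
    have hg2 : 0 < g₂ := hg₂ ▸ mul_pos_of_neg_of_neg (by linarith) (mul_neg_of_pos_of_neg hL hneg)
    rw [hx₁, hx₂, abs_of_neg hg1, abs_of_pos hg2,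
      div_neg_eq_neg_div, div_self hg1.ne, div_self hg2.ne']
    ring_nf
  · have hg1 : 0 < g₁ := hg₁ ▸ mul_pos (by linarith) (mul_pos hL hpos)
    have hg2 : g₂ < 0 := hg₂ ▸ mul_neg_of_neg_of_pos (by linarith) (mul_pos hL hpos)
    rw [hx₁, hx₂, abs_of_pos hg1, abs_of_neg hg2,
      div_neg_eq_neg_div, div_self hg1.ne', div_self hg2.ne]
    ring_nf
end

section
/- Let f : ℝᵈ → ℝ be ℓ-smooth with f(x_0) − inf f ≤ Δ. Run deterministic AMSGrad-norm without momentum: x_{t+1} = x_t − (γ_t/v̂_{t+1})∇f(x_t) with γ_t = γ/√(t+1) and v̂_{t+1} = max{v̂_t, ‖∇f(x_t)‖}, v̂_0 = v_0 > 0. If v_0 ≥ γℓ (so the effective stepsize never exceeds 1/ℓ, using that v̂ is nondecreasing), then (1/T)∑_{t=0}^{T−1}‖∇f(x_t)‖² ≤ (2Δ/(γ√T)) · max{v_0, √(2ℓΔ)}. -/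
open Finset intervalIntegral

variable {E : Type*} [NormedAddCommGroup E] [InnerProductSpace ℝ E] [CompleteSpace E]

lemma descent_aux (f : E → ℝ) (ℓ : ℝ) (hℓ : 0 ≤ ℓ)
    (hdiff : Differentiable ℝ f)
    (hlip : ∀ a b, ‖gradient f a - gradient f b‖ ≤ ℓ * ‖a - b‖) (x y : E) :
    f y ≤ f x + inner ℝ (gradient f x) (y - x) + ℓ / 2 * ‖y - x‖ ^ 2 := by
  set p : ℝ → E := fun t => x + t • (y - x) with hp
  have hderiv : ∀ t : ℝ, HasDerivAt (fun s => f (p s))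
      (inner ℝ (gradient f (p t)) (y - x) : ℝ) t := by
    intro t
    have h1 : HasDerivAt p (y - x) t := by
      simpa [hp] using ((hasDerivAt_id t).smul_const (y - x)).const_add x
    have h2 : HasFDerivAt f ((InnerProductSpace.toDual ℝ E) (gradient f (p t))) (p t) :=
      (hasGradientAt_iff_hasFDerivAt.mp (hdiff (p t)).hasGradientAt)
    exact (h2.comp_hasDerivAt t h1).congr_deriv (by simp [InnerProductSpace.toDual_apply_apply])
  have hcont : Continuous fun t : ℝ => (inner ℝ (gradient f (p t)) (y - x) : ℝ) := by
    have hg : Continuous (gradient f) := by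
      refine (LipschitzWith.of_dist_le_mul (K := ℓ.toNNReal) (f := gradient f) ?_).continuous
      intro a b
      simpa [dist_eq_norm, Real.coe_toNNReal _ hℓ] using hlip a b
    exact (hg.comp (by continuity)).inner continuous_const
  have hFTC : f (p 1) - f (p 0) = ∫ t in (0:ℝ)..1, inner ℝ (gradient f (p t)) (y - x) := by
    rw [intervalIntegral.integral_eq_sub_of_hasDerivAt (fun t _ => hderiv t)
      (hcont.intervalIntegrable 0 1)]
  have hmono : (∫ t in (0:ℝ)..1, (inner ℝ (gradient f (p t)) (y - x) : ℝ)) ≤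
      ∫ t in (0:ℝ)..1, ((inner ℝ (gradient f x) (y - x) : ℝ) + ℓ * t * ‖y - x‖ ^ 2) := by
    apply intervalIntegral.integral_mono_on (by norm_num)
      (hcont.intervalIntegrable 0 1)
      (by apply Continuous.intervalIntegrable; continuity)
    intro t ht
    have key : (inner ℝ (gradient f (p t)) (y - x) : ℝ) - inner ℝ (gradient f x) (y - x)
        = inner ℝ (gradient f (p t) - gradient f x) (y - x) := by
      rw [inner_sub_left]
    have hb : (inner ℝ (gradient f (p t) - gradient f x) (y - x) : ℝ) ≤
        ℓ * t * ‖y - x‖ ^ 2 := by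
      calc (inner ℝ (gradient f (p t) - gradient f x) (y - x) : ℝ)
          ≤ ‖gradient f (p t) - gradient f x‖ * ‖y - x‖ := real_inner_le_norm _ _
        _ ≤ (ℓ * ‖p t - x‖) * ‖y - x‖ := by
            exact mul_le_mul_of_nonneg_right (hlip _ _) (norm_nonneg _)
        _ = ℓ * t * ‖y - x‖ ^ 2 := by
            simp [hp, norm_smul, abs_of_nonneg ht.1]
            ring
    linarith
  have hint : (∫ t in (0:ℝ)..1, ((inner ℝ (gradient f x) (y - x) : ℝ) + ℓ * t * ‖y - x‖ ^ 2))
      = inner ℝ (gradient f x) (y - x) + ℓ / 2 * ‖y - x‖ ^ 2 := by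
    rw [intervalIntegral.integral_add (by apply Continuous.intervalIntegrable; continuity)
      (by apply Continuous.intervalIntegrable; continuity)]
    have he : (fun t : ℝ => ℓ * t * ‖y - x‖ ^ 2) = fun t : ℝ => (ℓ * ‖y - x‖ ^ 2) * t := by
      ext t; ring
    rw [he, intervalIntegral.integral_const_mul, integral_id]
    simp
    ring
  have h0 : p 0 = x := by simp [hp]
  have h1 : p 1 = y := by simp [hp]
  rw [h0, h1] at hFTC
  linarith [hmono.trans_eq hint, hFTC.le, hFTC.ge]

theorem stmt_8 {d : ℕ} (f : EuclideanSpace ℝ (Fin d) → ℝ) (ℓ γ v0 Δ fstar : ℝ)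
    (hℓ : 0 < ℓ) (hγ : 0 < γ) (hv0 : 0 < v0)
    (hdiff : Differentiable ℝ f)
    (hlip : ∀ x y, ‖gradient f x - gradient f y‖ ≤ ℓ * ‖x - y‖)
    (hbdd : BddBelow (Set.range f)) (hstar : fstar = ⨅ x, f x)
    (x : ℕ → EuclideanSpace ℝ (Fin d)) (v : ℕ → ℝ)
    (hΔ : f (x 0) - fstar ≤ Δ)
    (hv : v 0 = v0) (hvrec : ∀ t, v (t + 1) = max (v t) ‖gradient f (x t)‖)
    (hupd : ∀ t : ℕ,
      x (t + 1) = x t - (γ / (Real.sqrt ((t : ℝ) + 1) * v (t + 1))) • gradient f (x t))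
    (hbig : γ * ℓ ≤ v0) (T : ℕ) (hT : 0 < T) :
    (1 / (T : ℝ)) * ∑ t ∈ Finset.range T, ‖gradient f (x t)‖ ^ 2 ≤
      (2 * Δ / (γ * Real.sqrt T)) * max v0 (Real.sqrt (2 * ℓ * Δ)) := by
  set g : ℕ → EuclideanSpace ℝ (Fin d) := fun t => gradient f (x t) with hg
  set η : ℕ → ℝ := fun t => γ / (Real.sqrt ((t : ℝ) + 1) * v (t + 1)) with hη
  set M : ℝ := max v0 (Real.sqrt (2 * ℓ * Δ)) with hM
  have hfstar : ∀ z, fstar ≤ f z := fun z => hstar ▸ ciInf_le hbdd z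
  -- v lower bound
  have hvlb : ∀ t, v0 ≤ v t := by
    intro t; induction t with
    | zero => simp [hv]
    | succ n ih => rw [hvrec]; exact ih.trans (le_max_left _ _)
  have hvpos : ∀ t, 0 < v t := fun t => lt_of_lt_of_le hv0 (hvlb t)
  have hsq1 : ∀ t : ℕ, (1:ℝ) ≤ Real.sqrt ((t:ℝ) + 1) := by
    intro t
    have h0 : (0:ℝ) ≤ (t:ℝ) := Nat.cast_nonneg t
    exact Real.one_le_sqrt.mpr (by linarith)
  have hηpos : ∀ t, 0 < η t := by
    intro t
    apply div_pos hγ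
    exact mul_pos (lt_of_lt_of_le one_pos (hsq1 t)) (hvpos (t+1))
  have hηle : ∀ t, ℓ * η t ≤ 1 := by
    intro t
    have h1 : η t ≤ γ / v0 := by
      apply div_le_div_of_nonneg_left hγ.le hv0
      calc v0 = 1 * v0 := (one_mul _).symm
        _ ≤ Real.sqrt ((t:ℝ) + 1) * v (t + 1) :=
          mul_le_mul (hsq1 t) (hvlb (t+1)) hv0.le (by linarith [hsq1 t])
    calc ℓ * η t ≤ ℓ * (γ / v0) := mul_le_mul_of_nonneg_left h1 hℓ.le
      _ ≤ 1 := by rw [mul_div_assoc'] ; rw [div_le_one hv0]; linarith [hbig]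
  -- descent step
  have hstep : ∀ t, f (x (t + 1)) ≤ f (x t) - η t / 2 * ‖g t‖ ^ 2 := by
    intro t
    have hd := descent_aux f ℓ hℓ.le hdiff hlip (x t) (x (t + 1))
    have hyx : x (t + 1) - x t = -(η t) • g t := by
      rw [hupd t]; simp [hη, hg]
    rw [hyx] at hd
    have hinner : (inner ℝ (gradient f (x t)) ((-(η t)) • g t) : ℝ) = -(η t) * ‖g t‖ ^ 2 := by
      rw [real_inner_smul_right]
      rw [hg]
      rw [real_inner_self_eq_norm_sq]
    have hnorm : ‖(-(η t)) • g t‖ ^ 2 = η t ^ 2 * ‖g t‖ ^ 2 := by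
      rw [norm_smul, Real.norm_eq_abs, abs_neg, abs_of_pos (hηpos t)]; ring
    rw [hinner, hnorm] at hd
    have h1 := hηle t
    have h2 := hηpos t
    have h3 : (0:ℝ) ≤ ‖g t‖ ^ 2 := by positivity
    nlinarith [mul_nonneg (mul_nonneg h2.le h3) (sub_nonneg.mpr h1)]
  have hmono : ∀ t, f (x t) ≤ f (x 0) := by
    intro t; induction t with
    | zero => exact le_refl _
    | succ n ih =>
      have := hstep n
      have h3 : (0:ℝ) ≤ η n / 2 * ‖g n‖ ^ 2 :=
        mul_nonneg (by linarith [hηpos n]) (sq_nonneg _)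
      linarith
  have hΔ0 : 0 ≤ Δ := le_trans (by linarith [hfstar (x 0)]) hΔ
  -- gradient bound
  have hgsq : ∀ t, ‖g t‖ ^ 2 ≤ 2 * ℓ * Δ := by
    intro t
    have hd := descent_aux f ℓ hℓ.le hdiff hlip (x t) (x t - (1/ℓ) • g t)
    have hyx : x t - (1/ℓ) • g t - x t = (-(1/ℓ)) • g t := by
      simp [neg_smul]
    rw [hyx] at hd
    have hinner : (inner ℝ (gradient f (x t)) ((-(1/ℓ)) • g t) : ℝ) = -(1/ℓ) * ‖g t‖ ^ 2 := by
      rw [real_inner_smul_right, hg, real_inner_self_eq_norm_sq]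
    have hnorm : ‖(-(1/ℓ)) • g t‖ ^ 2 = (1/ℓ) ^ 2 * ‖g t‖ ^ 2 := by
      rw [norm_smul]; simp [abs_of_pos hℓ]; ring
    rw [hinner, hnorm] at hd
    have h1 := hfstar (x t - (1/ℓ) • g t)
    have h2 : f (x t) - fstar ≤ Δ := by linarith [hmono t]
    have e : -(1/ℓ) * ‖g t‖ ^ 2 + ℓ/2 * ((1/ℓ) ^ 2 * ‖g t‖ ^ 2)
        = -(1/(2*ℓ) * ‖g t‖ ^ 2) := by
      field_simp; ring
    have h4 : 1/(2*ℓ) * ‖g t‖ ^ 2 ≤ Δ := by linarith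
    have e2 : ‖g t‖ ^ 2 = 2*ℓ*(1/(2*ℓ) * ‖g t‖ ^ 2) := by field_simp
    rw [e2]
    exact mul_le_mul_of_nonneg_left h4 (by positivity)
  have hgle : ∀ t, ‖g t‖ ≤ Real.sqrt (2 * ℓ * Δ) := by
    intro t
    have := Real.sqrt_le_sqrt (hgsq t)
    rwa [Real.sqrt_sq (norm_nonneg _)] at this
  have hvub : ∀ t, v t ≤ M := by
    intro t; induction t with
    | zero => rw [hv]; exact le_max_left _ _
    | succ n ih =>
      rw [hvrec]
      exact max_le ih ((hgle n).trans (le_max_right _ _))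
  have hMpos : 0 < M := lt_of_lt_of_le hv0 (le_max_left _ _)
  have hsTpos : 0 < Real.sqrt T := Real.sqrt_pos.mpr (by exact_mod_cast hT)
  -- lower bound on η for t < T
  have hηlb : ∀ t ∈ Finset.range T, γ / (Real.sqrt T * M) ≤ η t := by
    intro t ht
    rw [Finset.mem_range] at ht
    apply div_le_div_of_nonneg_left hγ.le
    · exact mul_pos (lt_of_lt_of_le one_pos (hsq1 t)) (hvpos (t+1))
    · apply mul_le_mul _ (hvub (t+1)) (hvpos (t+1)).le hsTpos.le
      apply Real.sqrt_le_sqrt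
      have : (t:ℝ) + 1 ≤ T := by exact_mod_cast Nat.succ_le_of_lt ht
      linarith
  -- telescoping
  have htel : ∑ t ∈ Finset.range T, (η t / 2 * ‖g t‖ ^ 2) ≤ Δ := by
    have h1 : ∑ t ∈ Finset.range T, (η t / 2 * ‖g t‖ ^ 2) ≤
        ∑ t ∈ Finset.range T, (f (x t) - f (x (t + 1))) := by
      apply Finset.sum_le_sum
      intro t _
      linarith [hstep t]
    rw [Finset.sum_range_sub' (fun t => f (x t))] at h1
    have := hfstar (x T)
    linarith
  have hkey : γ / (Real.sqrt T * M) / 2 * ∑ t ∈ Finset.range T, ‖g t‖ ^ 2 ≤ Δ := by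
    rw [Finset.mul_sum]
    refine le_trans (Finset.sum_le_sum ?_) htel
    intro t ht
    have h3 : (0:ℝ) ≤ ‖g t‖ ^ 2 := by positivity
    have := hηlb t ht
    nlinarith
  -- final algebra
  have hsT2 : Real.sqrt T * Real.sqrt T = T := Real.mul_self_sqrt (Nat.cast_nonneg T)
  have hTpos : (0:ℝ) < T := by exact_mod_cast hT
  have hc : (0:ℝ) < γ / (Real.sqrt T * M) / 2 :=
    div_pos (div_pos hγ (mul_pos hsTpos hMpos)) two_pos
  have h2 : ∑ t ∈ Finset.range T, ‖g t‖ ^ 2 ≤ Δ / (γ / (Real.sqrt T * M) / 2) :=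
    (le_div_iff₀ hc).mpr (by linarith [hkey])
  have heq : (1/(T:ℝ)) * (Δ / (γ / (Real.sqrt T * M) / 2)) =
      (2 * Δ / (γ * Real.sqrt T)) * M := by
    field_simp
    linear_combination Δ * hsT2
  calc (1 / (T : ℝ)) * ∑ t ∈ Finset.range T, ‖g t‖ ^ 2
      ≤ (1/(T:ℝ)) * (Δ / (γ / (Real.sqrt T * M) / 2)) :=
        mul_le_mul_of_nonneg_left h2 (by positivity)
    _ = (2 * Δ / (γ * Real.sqrt T)) * M := heq
end

section
/- Let f : ℝᵈ → ℝ be ℓ-smooth and consider deterministic AMSGrad-norm without momentum with γ_t = γ/(t+1)^α, 0 < α < 1, v̂_{t+1} = max{v̂_t, ‖∇f(x_t)‖}, v̂_0 = v_0 > 0 and update x_{t+1} = x_t − (γ_t/v̂_{t+1})∇f(x_t). Let τ be the first iteration with effective stepsize γ_τ/v̂_{τ+1} ≤ 1/ℓ, and suppose τ ≥ 1. Then τ < (ℓγ/v_0)^{1/α} and ∑_{t=0}^{τ−1}‖∇f(x_t)‖² ≤ (ℓγ/v_0)^{1/α} · γ²ℓ². -/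
open Finset

theorem stmt_9 {d : ℕ} (f : EuclideanSpace ℝ (Fin d) → ℝ) (ℓ γ v0 α : ℝ)
    (hℓ : 0 < ℓ) (hγ : 0 < γ) (hv0 : 0 < v0) (hα1 : 0 < α) (hα2 : α < 1)
    (hdiff : Differentiable ℝ f)
    (hlip : ∀ x y, ‖gradient f x - gradient f y‖ ≤ ℓ * ‖x - y‖)
    (x : ℕ → EuclideanSpace ℝ (Fin d)) (v : ℕ → ℝ)
    (hv : v 0 = v0) (hvrec : ∀ t, v (t + 1) = max (v t) ‖gradient f (x t)‖)
    (hupd : ∀ t : ℕ,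
      x (t + 1) = x t - (γ / (((t : ℝ) + 1) ^ α * v (t + 1))) • gradient f (x t))
    (τ : ℕ) (hτ1 : 1 ≤ τ)
    (hτfirst : γ / (((τ : ℝ) + 1) ^ α * v (τ + 1)) ≤ 1 / ℓ)
    (hτbefore : ∀ t < τ, 1 / ℓ < γ / (((t : ℝ) + 1) ^ α * v (t + 1))) :
    (τ : ℝ) < (ℓ * γ / v0) ^ (1 / α) ∧
      ∑ t ∈ Finset.range τ, ‖gradient f (x t)‖ ^ 2 ≤
        (ℓ * γ / v0) ^ (1 / α) * (γ ^ 2 * ℓ ^ 2) := by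
  have hvpos : ∀ t, 0 < v t := by
    intro t
    induction t with
    | zero => rw [hv]; exact hv0
    | succ n ih => rw [hvrec]; exact lt_max_of_lt_left ih
  have hv0le : ∀ t, v0 ≤ v t := by
    intro t
    induction t with
    | zero => rw [hv]
    | succ n ih => rw [hvrec]; exact le_max_of_le_left ih
  -- for t < τ, (t+1)^α * v (t+1) < ℓ * γ
  have key : ∀ t < τ, (((t : ℝ) + 1) ^ α) * v (t + 1) < ℓ * γ := by
    intro t ht
    have h := hτbefore t ht
    have hp : (0:ℝ) < ((t:ℝ)+1)^α := Real.rpow_pos_of_pos (by positivity) α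
    have hvp := hvpos (t+1)
    rw [div_lt_div_iff₀ hℓ (by positivity)] at h
    nlinarith
  -- gradient bound for t < τ
  have gbound : ∀ t < τ, ‖gradient f (x t)‖ ≤ ℓ * γ := by
    intro t ht
    have hge1 : (1:ℝ) ≤ ((t:ℝ)+1)^α :=
      Real.one_le_rpow (by push_cast; linarith [Nat.cast_nonneg (α := ℝ) t]) hα1.le
    have hvp := hvpos (t+1)
    have hk := key t ht
    have hvb : v (t+1) < ℓ * γ := by nlinarith
    have : ‖gradient f (x t)‖ ≤ v (t+1) := by rw [hvrec]; exact le_max_right _ _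
    linarith
  -- τ bound
  obtain ⟨s, hs⟩ : ∃ s, τ = s + 1 := ⟨τ - 1, (Nat.succ_pred_eq_of_pos hτ1).symm⟩
  have hk := key s (by omega)
  have hcast : ((s:ℝ) + 1) = (τ:ℝ) := by rw [hs]; push_cast; ring
  rw [hcast] at hk
  have htpow : ((τ:ℝ)) ^ α * v0 ≤ ((τ:ℝ)) ^ α * v τ := by
    have := hv0le τ
    have hp : (0:ℝ) < ((τ:ℝ))^α := Real.rpow_pos_of_pos (by positivity) α
    nlinarith
  have hτα : ((τ:ℝ)) ^ α < ℓ * γ / v0 := by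
    rw [lt_div_iff₀ hv0]
    calc ((τ:ℝ))^α * v0 ≤ ((τ:ℝ))^α * v τ := htpow
      _ < ℓ * γ := by rw [hs] at hk ⊢; exact hk
  have hτlt : (τ : ℝ) < (ℓ * γ / v0) ^ (1 / α) := by
    have hpos : (0:ℝ) ≤ (τ:ℝ) ^ α := (Real.rpow_pos_of_pos (by positivity) α).le
    have := Real.rpow_lt_rpow hpos hτα (by positivity : (0:ℝ) < 1/α)
    rwa [← Real.rpow_mul (Nat.cast_nonneg τ), mul_one_div, div_self hα1.ne',
      Real.rpow_one] at this
  refine ⟨hτlt, ?_⟩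
  have hsum : ∑ t ∈ Finset.range τ, ‖gradient f (x t)‖ ^ 2 ≤ (τ:ℝ) * (γ^2 * ℓ^2) := by
    calc ∑ t ∈ Finset.range τ, ‖gradient f (x t)‖ ^ 2
        ≤ ∑ t ∈ Finset.range τ, (γ^2 * ℓ^2) := by
          apply Finset.sum_le_sum
          intro t ht
          have := gbound t (Finset.mem_range.mp ht)
          have hn := norm_nonneg (gradient f (x t))
          nlinarith
      _ = (τ:ℝ) * (γ^2 * ℓ^2) := by rw [Finset.sum_const, Finset.card_range]; push_cast; ring
  calc ∑ t ∈ Finset.range τ, ‖gradient f (x t)‖ ^ 2 ≤ (τ:ℝ) * (γ^2 * ℓ^2) := hsum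
    _ ≤ (ℓ * γ / v0) ^ (1 / α) * (γ^2 * ℓ^2) := by
        apply mul_le_mul_of_nonneg_right hτlt.le (by positivity)
end

section
/- Consider the one-dimensional quadratic F(x) = x²/(4c) with c = max{1/ℓ, ∑_{t=0}^{T−1} η̃_t}, and run gradient descent with momentum: m_{t+1} = β₁ m_t + (1−β₁)F'(x_t), x_{t+1} = x_t − η_t m_{t+1}, with m_0 ≤ 0, 0 ≤ β₁ < 1, 0 < η_t ≤ η̃_t, starting from x_0 = √(Δc). Then for all 0 ≤ t ≤ T−1, |F'(x_t)| ≥ √(Δ/(16c)); in particular F(x_0) − inf F ≤ Δ and min_{0≤t≤T−1}|F'(x_t)| ≥ √(Δ / (16 max{1/ℓ, ∑_{t<T} η̃_t})). -/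
open Finset

/-- running maximum of the iterates -/
noncomputable def stmt10X (x : ℕ → ℝ) : ℕ → ℝ
  | 0 => x 0
  | (t + 1) => max (stmt10X x t) (x (t + 1))

theorem stmt_10 (ℓ Δ β₁ c : ℝ) (hℓ : 0 < ℓ) (hΔ : 0 < Δ)
    (hβ₁ : 0 ≤ β₁) (hβ₁' : β₁ < 1) (T : ℕ)
    (ηtil η : ℕ → ℝ) (hη : ∀ t, 0 < η t) (hηle : ∀ t, η t ≤ ηtil t)
    (hc : c = max (1 / ℓ) (∑ t ∈ Finset.range T, ηtil t))
    (F : ℝ → ℝ) (hF : F = fun x => x ^ 2 / (4 * c))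
    (m x : ℕ → ℝ) (hm0 : m 0 ≤ 0)
    (hx0 : x 0 = Real.sqrt (Δ * c))
    (hm : ∀ t, m (t + 1) = β₁ * m t + (1 - β₁) * deriv F (x t))
    (hx : ∀ t, x (t + 1) = x t - η t * m (t + 1)) :
    (F (x 0) - ⨅ y, F y ≤ Δ) ∧
      ∀ t < T, Real.sqrt (Δ / (16 * c)) ≤ |deriv F (x t)| := by
  have hc0 : 0 < c := by
    rw [hc]
    exact lt_max_of_lt_left (by positivity)
  -- derivative formula
  have hd : ∀ y : ℝ, deriv F y = y / (2 * c) := by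
    intro y
    rw [hF, deriv_div_const]
    simp only [deriv_pow_field]
    ring
  -- x 0 is positive
  have hΔc : (0:ℝ) < Δ * c := mul_pos hΔ hc0
  have hx0pos : 0 < x 0 := by rw [hx0]; exact Real.sqrt_pos.mpr hΔc
  -- sum bound
  have hηtil : ∀ t, 0 < ηtil t := fun t => lt_of_lt_of_le (hη t) (hηle t)
  have hsumnn : ∀ t : ℕ, 0 ≤ ∑ s ∈ Finset.range t, ηtil s :=
    fun t => Finset.sum_nonneg fun i _ => (hηtil i).le
  have hsum : ∀ t ≤ T, ∑ s ∈ Finset.range t, ηtil s ≤ c := by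
    intro t ht
    calc ∑ s ∈ Finset.range t, ηtil s ≤ ∑ s ∈ Finset.range T, ηtil s := by
          apply Finset.sum_le_sum_of_subset_of_nonneg
          · exact Finset.range_subset_range.mpr ht
          · intro i _ _; exact (hηtil i).le
      _ ≤ c := hc ▸ le_max_right _ _
  set X := stmt10X x with hX
  have hXsucc : ∀ t, X (t + 1) = max (X t) (x (t + 1)) := fun t => rfl
  -- key invariant
  have inv : ∀ t, m t ≤ X t / (2 * c) ∧ x t ≤ X t ∧ x 0 ≤ X t ∧
      X t - x t ≤ (∑ s ∈ Finset.range t, ηtil s) * (X t / (2 * c)) := by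
    intro t
    induction t with
    | zero =>
        refine ⟨le_trans hm0 (by positivity), le_refl _, le_refl _, by simp [hX, stmt10X]⟩
    | succ t ih =>
        obtain ⟨ihm, ihx, ih0, ihgap⟩ := ih
        have hXpos : 0 < X t := lt_of_lt_of_le hx0pos ih0
        have hXle : X t ≤ X (t + 1) := le_max_left _ _
        have hxle : x (t + 1) ≤ X (t + 1) := le_max_right _ _
        have h0le : x 0 ≤ X (t + 1) := le_trans ih0 hXle
        -- momentum bound
        have hmb : m (t + 1) ≤ X t / (2 * c) := by
          rw [hm t, hd]
          have h1 : β₁ * m t ≤ β₁ * (X t / (2 * c)) := mul_le_mul_of_nonneg_left ihm hβ₁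
          have h2 : (1 - β₁) * (x t / (2 * c)) ≤ (1 - β₁) * (X t / (2 * c)) := by
            apply mul_le_mul_of_nonneg_left _ (by linarith)
            exact div_le_div_of_nonneg_right ihx (by positivity)
          linarith
        have hmb' : m (t + 1) ≤ X (t + 1) / (2 * c) :=
          le_trans hmb (div_le_div_of_nonneg_right hXle (by positivity))
        refine ⟨hmb', hxle, h0le, ?_⟩
        rw [Finset.sum_range_succ]
        rcases le_or_gt (m (t + 1)) 0 with hsign | hsign
        · -- x does not decrease
          have hup : x t ≤ x (t + 1) := by
            rw [hx t]
            nlinarith [hη t]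
          have hgap' : X (t + 1) - x (t + 1) ≤ X t - x t := by
            rcases le_total (x (t + 1)) (X t) with h | h
            · rw [hXsucc, max_eq_left h]; linarith
            · rw [hXsucc, max_eq_right h]; linarith
          have hmono : (∑ s ∈ Finset.range t, ηtil s) * (X t / (2 * c)) ≤
              (∑ s ∈ Finset.range t, ηtil s + ηtil t) * (X (t + 1) / (2 * c)) := by
            apply mul_le_mul
            · linarith [(hηtil t).le, hsumnn t]
            · exact div_le_div_of_nonneg_right hXle (by positivity)
            · positivity
            · linarith [hsumnn t, (hηtil t).le]
          linarith
        · -- step downward, bounded by momentum bound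
          have hdown : x (t + 1) ≤ x t := by
            rw [hx t]
            nlinarith [hη t]
          have hXeq : X (t + 1) = X t := by
            rw [hXsucc, max_eq_left (le_trans hdown ihx)]
          have hstep : η t * m (t + 1) ≤ ηtil t * (X t / (2 * c)) := by
            calc η t * m (t + 1) ≤ ηtil t * m (t + 1) :=
                  mul_le_mul_of_nonneg_right (hηle t) hsign.le
              _ ≤ ηtil t * (X t / (2 * c)) :=
                  mul_le_mul_of_nonneg_left hmb (hηtil t).le
          rw [hXeq, hx t]
          have : ∑ s ∈ Finset.range t, ηtil s + ηtil t ≥ 0 := by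
            linarith [hsumnn t, (hηtil t).le]
          nlinarith [ihgap]
  constructor
  · -- suboptimality bound
    have hF0 : ∀ y, 0 ≤ F y := by
      intro y; rw [hF]; positivity
    have hinf : (0:ℝ) ≤ ⨅ y, F y := le_ciInf hF0
    have hFx0 : F (x 0) = Δ / 4 := by
      rw [hF, hx0]
      simp only
      rw [Real.sq_sqrt hΔc.le]
      field_simp
    linarith
  · intro t ht
    obtain ⟨_, _, ih0, ihgap⟩ := inv t
    have hXpos : 0 < X t := lt_of_lt_of_le hx0pos ih0
    have hxhalf : X t / 2 ≤ x t := by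
      have h1 : (∑ s ∈ Finset.range t, ηtil s) * (X t / (2 * c)) ≤ c * (X t / (2 * c)) :=
        mul_le_mul_of_nonneg_right (hsum t ht.le) (by positivity)
      have h2 : c * (X t / (2 * c)) = X t / 2 := by field_simp
      linarith
    have hxlb : Real.sqrt (Δ * c) / 2 ≤ x t := by
      rw [hx0] at ih0
      linarith
    have hxpos : 0 < x t := lt_of_lt_of_le (by positivity) hxlb
    rw [hd, abs_of_pos (by positivity)]
    have hkey : Real.sqrt (Δ / (16 * c)) = Real.sqrt (Δ * c) / (4 * c) := by
      have h : Δ / (16 * c) = (Δ * c) / (4 * c) ^ 2 := by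
        field_simp; ring
      rw [h, Real.sqrt_div hΔc.le, Real.sqrt_sq (by positivity)]
    rw [hkey, div_le_div_iff₀ (by positivity) (by positivity)]
    nlinarith [hxlb, Real.sqrt_nonneg (Δ * c)]
end

section
/- Consider deterministic normalized gradient descent on an ℓ-smooth function f with f(x_0) − inf f ≤ Δ: x_{t+1} = x_t − (γ_t/‖∇f(x_t)‖)∇f(x_t) with γ_t = γ/√(t+1) (and x_{t+1} = x_t if ∇f(x_t) = 0). Then (1/T)∑_{t=0}^{T−1}‖∇f(x_t)‖ ≤ 3(Δ/γ + ℓγ log T) T^{−1/2} for T ≥ 2. -/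
open Finset Classical
open scoped Classical

lemma descent {d : ℕ} (f : EuclideanSpace ℝ (Fin d) → ℝ) (ℓ : ℝ)
    (hdiff : Differentiable ℝ f)
    (hlip : ∀ x y, ‖gradient f x - gradient f y‖ ≤ ℓ * ‖x - y‖)
    (x v : EuclideanSpace ℝ (Fin d)) :
    f (x + v) ≤ f x + inner ℝ (gradient f x) v + ℓ / 2 * ‖v‖ ^ 2 := by
  set φ : ℝ → ℝ := fun t => ℓ / 2 * ‖v‖ ^ 2 * t ^ 2 + t * (inner ℝ (gradient f x) v : ℝ)
      + f x - f (x + t • v) with hφ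
  have key : ∀ w : ℝ,
      HasDerivAt φ (ℓ * ‖v‖ ^ 2 * w + (inner ℝ (gradient f x) v : ℝ)
        - (inner ℝ (gradient f (x + w • v)) v : ℝ)) w := by
    intro w
    have h1 : HasDerivAt (fun t : ℝ => x + t • v) v w := by
      simpa using ((hasDerivAt_id w).smul_const v).const_add x
    have h2 : HasDerivAt (fun t : ℝ => f (x + t • v))
        ((inner ℝ (gradient f (x + w • v)) v : ℝ)) w := by
      exact ((hdiff (x + w • v)).hasGradientAt.hasFDerivAt).comp_hasDerivAt w h1
    have h3 : HasDerivAt (fun t : ℝ => ℓ / 2 * ‖v‖ ^ 2 * t ^ 2 + t * (inner ℝ (gradient f x) v : ℝ) + f x)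
        (ℓ * ‖v‖ ^ 2 * w + (inner ℝ (gradient f x) v : ℝ)) w := by
      have := (((hasDerivAt_pow 2 w).const_mul (ℓ / 2 * ‖v‖ ^ 2)).add
        ((hasDerivAt_id w).mul_const (inner ℝ (gradient f x) v : ℝ))).add_const (f x)
      exact this.congr_deriv (by norm_num; ring)
    exact h3.sub h2
  have hmono : MonotoneOn φ (Set.Icc (0:ℝ) 1) := by
    apply monotoneOn_of_deriv_nonneg (convex_Icc 0 1)
    · exact fun t _ => ((key t).continuousAt).continuousWithinAt
    · intro t _
      exact ((key t).differentiableAt).differentiableWithinAt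
    · intro t ht
      rw [interior_Icc] at ht
      rw [(key t).deriv]
      have h4 : (inner ℝ (gradient f x) v : ℝ) - (inner ℝ (gradient f (x + t • v)) v : ℝ)
          ≥ -(ℓ * ‖v‖ ^ 2 * t) := by
        have := real_inner_le_norm (gradient f (x + t • v) - gradient f x) v
        rw [norm_sub_rev] at this
        have hl := hlip x (x + t • v)
        have hn : ‖x - (x + t • v)‖ = t * ‖v‖ := by
          simp [norm_smul, abs_of_pos ht.1]
        rw [inner_sub_left] at this
        rw [hn] at hl
        nlinarith [mul_le_mul_of_nonneg_right hl (norm_nonneg v), norm_nonneg v]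
      linarith
  have h0 : φ 0 = 0 := by simp [hφ]
  have h1 : φ 0 ≤ φ 1 := hmono (by norm_num) (by norm_num) (by norm_num)
  rw [h0] at h1
  simp only [hφ, one_smul, one_pow, one_mul] at h1
  linarith

lemma harmonic_le_log (n : ℕ) (hn : 1 ≤ n) :
    ∑ t ∈ Finset.range n, (1 : ℝ) / (t + 1) ≤ 1 + Real.log n := by
  induction n with
  | zero => omega
  | succ m ih =>
    rcases Nat.eq_or_lt_of_le hn with h | h
    · simp [← h]
    · have hm : 1 ≤ m := by omega
      have ihm := ih hm
      rw [Finset.sum_range_succ]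
      have hmpos : (0:ℝ) < m := by exact_mod_cast hm
      have hstep : (1:ℝ) / (m + 1) ≤ Real.log (m + 1) - Real.log m := by
        have hq : (0:ℝ) < (m:ℝ) / (m + 1) := by positivity
        have := Real.log_le_sub_one_of_pos hq
        rw [Real.log_div (by positivity) (by positivity)] at this
        have h1 : (m:ℝ) / (m+1) - 1 = -(1/(m+1)) := by field_simp; ring
        linarith [this, h1 ▸ this]
      push_cast
      linarith

theorem stmt_18 {d : ℕ} (f : EuclideanSpace ℝ (Fin d) → ℝ) (ℓ γ Δ fstar : ℝ)
    (hℓ : 0 < ℓ) (hγ : 0 < γ) (hdiff : Differentiable ℝ f)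
    (hlip : ∀ x y, ‖gradient f x - gradient f y‖ ≤ ℓ * ‖x - y‖)
    (hbdd : BddBelow (Set.range f)) (hstar : fstar = ⨅ x, f x)
    (x : ℕ → EuclideanSpace ℝ (Fin d)) (hΔ : f (x 0) - fstar ≤ Δ)
    (hupd : ∀ t : ℕ,
      x (t + 1) = if gradient f (x t) = 0 then x t
        else x t - (γ / (Real.sqrt ((t : ℝ) + 1) * ‖gradient f (x t)‖)) • gradient f (x t))
    (T : ℕ) (hT : 2 ≤ T) :
    (1 / (T : ℝ)) * ∑ t ∈ Finset.range T, ‖gradient f (x t)‖ ≤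
      3 * (Δ / γ + ℓ * γ * Real.log T) / Real.sqrt T := by
  set g : ℕ → EuclideanSpace ℝ (Fin d) := fun t => gradient f (x t) with hg
  set γt : ℕ → ℝ := fun t => γ / Real.sqrt ((t:ℝ) + 1) with hγt
  have hst : ∀ t : ℕ, (0:ℝ) < Real.sqrt ((t:ℝ) + 1) := fun t =>
    Real.sqrt_pos.2 (by positivity)
  have hγtpos : ∀ t, 0 < γt t := fun t => div_pos hγ (hst t)
  -- per-step inequality
  have step : ∀ t : ℕ, f (x (t+1)) ≤ f (x t) - γt t * ‖g t‖ + ℓ / 2 * (γt t) ^ 2 := by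
    intro t
    rcases eq_or_ne (g t) 0 with hz | hz
    · rw [hupd t, if_pos hz, hz]
      have : 0 ≤ ℓ / 2 * (γt t)^2 := by positivity
      simp only [norm_zero, mul_zero]
      linarith
    · have hxu : x (t+1) = x t + (-(γ / (Real.sqrt ((t:ℝ) + 1) * ‖g t‖))) • g t := by
        rw [hupd t, if_neg hz]
        module
      have hgn : (0:ℝ) < ‖g t‖ := norm_pos_iff.2 hz
      have hdes := descent f ℓ hdiff hlip (x t) ((-(γ / (Real.sqrt ((t:ℝ) + 1) * ‖g t‖))) • g t)
      rw [← hxu] at hdes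
      have hinner : (inner ℝ (g t) ((-(γ / (Real.sqrt ((t:ℝ) + 1) * ‖g t‖))) • g t) : ℝ)
          = - γt t * ‖g t‖ := by
        rw [real_inner_smul_right, real_inner_self_eq_norm_sq]
        field_simp [hγt]
        simp only [hγt]
        field_simp
      have hnv : ‖(-(γ / (Real.sqrt ((t:ℝ) + 1) * ‖g t‖))) • g t‖ = γt t := by
        rw [norm_smul, norm_neg]
        rw [Real.norm_eq_abs, abs_of_pos (by positivity)]
        field_simp [hγt]
        simp only [hγt]
        field_simp
      rw [hinner, hnv] at hdes
      linarith
  -- telescoping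
  have tele : ∀ n : ℕ, ∑ t ∈ Finset.range n, γt t * ‖g t‖
      ≤ f (x 0) - f (x n) + ℓ / 2 * ∑ t ∈ Finset.range n, (γt t) ^ 2 := by
    intro n
    induction n with
    | zero => simp
    | succ m ih =>
      rw [Finset.sum_range_succ, Finset.sum_range_succ]
      have := step m
      linarith
  -- f (x n) ≥ fstar
  have hfstar : ∀ n, fstar ≤ f (x n) := fun n => hstar ▸ ciInf_le hbdd (x n)
  have hΔ0 : 0 ≤ Δ := le_trans (by linarith [hfstar 0]) hΔ
  -- harmonic
  have hsum2 : ∑ t ∈ Finset.range T, (γt t) ^ 2 = γ^2 * ∑ t ∈ Finset.range T, (1:ℝ)/(t+1) := by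
    rw [Finset.mul_sum]
    apply Finset.sum_congr rfl
    intro t _
    rw [hγt, div_pow, Real.sq_sqrt (by positivity)]
    ring
  have hharm := harmonic_le_log T (by omega)
  -- lower bound on sum
  have hTpos : (0:ℝ) < T := by exact_mod_cast (by omega : 0 < T)
  have hsT : (0:ℝ) < Real.sqrt T := Real.sqrt_pos.2 hTpos
  have hlow : (γ / Real.sqrt T) * ∑ t ∈ Finset.range T, ‖g t‖
      ≤ ∑ t ∈ Finset.range T, γt t * ‖g t‖ := by
    rw [Finset.mul_sum]
    apply Finset.sum_le_sum
    intro t ht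
    apply mul_le_mul_of_nonneg_right _ (norm_nonneg _)
    apply div_le_div_of_nonneg_left hγ.le (hst t)
    apply Real.sqrt_le_sqrt
    have : (t:ℝ) + 1 ≤ T := by
      have := Finset.mem_range.1 ht
      push_cast
      exact_mod_cast Nat.succ_le_of_lt this
    exact this
  -- combine
  set S := ∑ t ∈ Finset.range T, ‖g t‖ with hS
  have hSnn : 0 ≤ S := Finset.sum_nonneg fun t _ => norm_nonneg _
  have hL : Real.log 2 ≤ Real.log T := Real.log_le_log (by norm_num) (by exact_mod_cast hT)
  have hlog2 : (0.6931471803 : ℝ) < Real.log 2 := Real.log_two_gt_d9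
  have hmain : (γ / Real.sqrt T) * S ≤ Δ + ℓ/2 * (γ^2 * (1 + Real.log T)) := by
    have h1 := tele T
    have h2 : f (x 0) - f (x T) ≤ Δ := by linarith [hfstar T]
    have h3 : ℓ/2 * ∑ t ∈ Finset.range T, (γt t)^2 ≤ ℓ/2 * (γ^2 * (1 + Real.log T)) := by
      rw [hsum2]
      apply mul_le_mul_of_nonneg_left _ (by positivity)
      exact mul_le_mul_of_nonneg_left hharm (by positivity)
    linarith [hlow]
  -- final arithmetic
  have hkey : S ≤ 3 * (Δ / γ + ℓ * γ * Real.log T) * Real.sqrt T := by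
    have h1 : S ≤ Real.sqrt T / γ * (Δ + ℓ/2 * (γ^2 * (1 + Real.log T))) := by
      rw [div_mul_eq_mul_div, le_div_iff₀ hγ]
      calc S * γ = (γ / Real.sqrt T * S) * Real.sqrt T := by
            field_simp
        _ ≤ (Δ + ℓ/2 * (γ^2 * (1 + Real.log T))) * Real.sqrt T :=
            mul_le_mul_of_nonneg_right hmain hsT.le
        _ = Real.sqrt T * (Δ + ℓ/2 * (γ^2 * (1 + Real.log T))) := by ring
    have h2 : Real.sqrt T / γ * (Δ + ℓ/2 * (γ^2 * (1 + Real.log T)))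
        ≤ 3 * (Δ / γ + ℓ * γ * Real.log T) * Real.sqrt T := by
      have hcoef : Δ / γ + ℓ/2 * γ * (1 + Real.log T) ≤ 3 * (Δ / γ + ℓ * γ * Real.log T) := by
        have hLT : (0.69:ℝ) ≤ Real.log T := by linarith
        have h5 : 1 + Real.log T ≤ 6 * Real.log T := by linarith
        have : ℓ/2 * γ * (1 + Real.log T) ≤ ℓ/2 * γ * (6 * Real.log T) :=
          mul_le_mul_of_nonneg_left h5 (by positivity)
        have hΔγ : 0 ≤ Δ / γ := div_nonneg hΔ0 hγ.le
        nlinarith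
      have heq : Real.sqrt T / γ * (Δ + ℓ/2 * (γ^2 * (1 + Real.log T)))
          = (Δ / γ + ℓ/2 * γ * (1 + Real.log T)) * Real.sqrt T := by
        field_simp
      rw [heq]
      exact mul_le_mul_of_nonneg_right hcoef hsT.le
    linarith
  have heq2 : (1 / (T:ℝ)) * S = S / T := by ring
  rw [heq2, div_le_div_iff₀ hTpos hsT]
  have hTT : Real.sqrt T * Real.sqrt T = T := Real.mul_self_sqrt hTpos.le
  nlinarith [mul_le_mul_of_nonneg_right hkey hsT.le]
end
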